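/- (Closedness of the bad set 𝒱.) Let r ≥ 2, n ≥ 2, m ∈ {1,…,n−1} and s ∈ {1,…,r−1} be integers. Then 𝒱(r,s,m,n) is a closed subset of 𝒫*(r,n) for the topology induced by 𝒫(r,n): if a sequence (Q_k)_{k∈ℕ} ⊆ 𝒱(r,s,m,n) converges in 𝒫(r,n) to some Q̄ with ∇Q̄(0) ≠ 0, then Q̄ ∈ 𝒱(r,s,m,n). -/

import Mathlib

open MvPolynomial Metric Set Matrix
open scoped RealInnerProductSpace

noncomputable section

/-- `𝒫(r,n)`: polynomials in `n` real variables with zero constant term and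
total degree at most `r`. -/
def PolySpace (r n : ℕ) : Set (MvPolynomial (Fin n) ℝ) :=
  {P | P.coeff 0 = 0 ∧ P.totalDegree ≤ r}

/-- Sup-norm of the coefficients of a polynomial. -/
def polyNorm {n : ℕ} (P : MvPolynomial (Fin n) ℝ) : ℝ :=
  ⨆ μ : Fin n →₀ ℕ, |P.coeff μ|

/-- The vector of partial derivatives (the gradient) of a polynomial at a point. -/
def polyGrad {n : ℕ} (P : MvPolynomial (Fin n) ℝ) (x : Fin n → ℝ) : Fin n → ℝ :=
  fun i => eval x (pderiv i P)

/-- `𝒫*(r,n)`: elements of `𝒫(r,n)` with nonzero gradient at the origin. -/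
def PolySpaceStar (r n : ℕ) : Set (MvPolynomial (Fin n) ℝ) :=
  {P | P ∈ PolySpace r n ∧ polyGrad P 0 ≠ 0}

/-- The `s`-truncation parametrized by the `i`-th coordinate with coefficients `a`:
the curve whose `i`-th component is `t` and whose `j`-th component (`j ≠ i`) is
`∑_{k=1}^{s} a_{jk} t^k`. -/
def truncCurve {m : ℕ} (s : ℕ) (i : Fin m) (a : Fin m → Fin s → ℝ) : ℝ → Fin m → ℝ :=
  fun t j => if j = i then t else ∑ k : Fin s, a j k * t ^ ((k : ℕ) + 1)

/-- `P` satisfies the `s`-vanishing condition on the curve `γ`. -/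
def SVanishing {m : ℕ} (s : ℕ) (P : MvPolynomial (Fin m) ℝ) (γ : ℝ → Fin m → ℝ) : Prop :=
  ∀ ℓ : Fin m, ∀ α ≤ s, iteratedDeriv α (fun t => eval (γ t) (pderiv ℓ P)) 0 = 0

/-- `σ^i(r,s,m)`: polynomials of `𝒫(r,m)` that satisfy the `s`-vanishing condition on
some `s`-truncation parametrized by the `i`-th coordinate. -/
def sigmaI (r s m : ℕ) (i : Fin m) : Set (MvPolynomial (Fin m) ℝ) :=
  {P | P ∈ PolySpace r m ∧ ∃ a : Fin m → Fin s → ℝ, SVanishing s P (truncCurve s i a)}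

/-- `σ(r,s,m)`. -/
def sigmaSet (r s m : ℕ) : Set (MvPolynomial (Fin m) ℝ) :=
  ⋃ i : Fin m, sigmaI r s m i

/-- Closure with respect to the coefficient sup-norm. -/
def closureNorm {n : ℕ} (A : Set (MvPolynomial (Fin n) ℝ)) : Set (MvPolynomial (Fin n) ℝ) :=
  {P | ∀ ε > (0:ℝ), ∃ Q ∈ A, polyNorm (P - Q) < ε}

/-- `Σ(r,s,m)`: the closure of the set of `s`-vanishing polynomials. -/
def SigmaCl (r s m : ℕ) : Set (MvPolynomial (Fin m) ℝ) :=
  closureNorm (sigmaSet r s m)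

/-- The restriction `x ↦ Q(Ax)` of `Q` to the span of the columns of `A`. -/
def restrictPoly {n m : ℕ} (A : Matrix (Fin n) (Fin m) ℝ) (Q : MvPolynomial (Fin n) ℝ) :
    MvPolynomial (Fin m) ℝ :=
  aeval (fun i : Fin n => ∑ j : Fin m, C (A i j) * X j) Q

/-- The bad set `𝒱(r,s,m,n)`: polynomials of `𝒫*(r,n)` whose restriction to the span of
the (orthonormal) columns of some matrix `A` lies in `Σ(r,s,m)`. -/
def badV (r s m n : ℕ) : Set (MvPolynomial (Fin n) ℝ) :=
  {Q | Q ∈ PolySpaceStar r n ∧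
    ∃ A : Matrix (Fin n) (Fin m) ℝ, Aᵀ * A = 1 ∧ restrictPoly A Q ∈ SigmaCl r s m}

namespace Aux

variable {n m : ℕ}

lemma bddAbove_coeff (P : MvPolynomial (Fin n) ℝ) :
    BddAbove (Set.range fun μ : Fin n →₀ ℕ => |P.coeff μ|) := by
  have hfin : (Set.range fun μ : Fin n →₀ ℕ => |P.coeff μ|).Finite := by
    apply Set.Finite.subset ((P.support.finite_toSet.image fun μ => |P.coeff μ|).insert 0)
    rintro x ⟨μ, rfl⟩
    by_cases h : μ ∈ P.support
    · exact Set.mem_insert_of_mem _ ⟨μ, h, rfl⟩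
    · simp [MvPolynomial.notMem_support_iff.mp h]
  exact hfin.bddAbove

lemma abs_coeff_le (P : MvPolynomial (Fin n) ℝ) (μ : Fin n →₀ ℕ) :
    |P.coeff μ| ≤ polyNorm P :=
  le_ciSup (bddAbove_coeff P) μ

lemma polyNorm_le {P : MvPolynomial (Fin n) ℝ} {c : ℝ} (h : ∀ μ, |P.coeff μ| ≤ c) :
    polyNorm P ≤ c :=
  ciSup_le h

lemma polyNorm_sub_le (P R Q : MvPolynomial (Fin n) ℝ) :
    polyNorm (P - Q) ≤ polyNorm (P - R) + polyNorm (R - Q) := by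
  apply polyNorm_le
  intro μ
  have h : (P - Q).coeff μ = (P - R).coeff μ + (R - Q).coeff μ := by
    simp only [MvPolynomial.coeff_sub]; ring
  rw [h]
  exact (abs_add_le _ _).trans (add_le_add (abs_coeff_le _ _) (abs_coeff_le _ _))

lemma continuous_coeff_restrict (P : MvPolynomial (Fin n) ℝ) :
    ∀ ν : Fin m →₀ ℕ,
      Continuous fun A : Matrix (Fin n) (Fin m) ℝ => (restrictPoly A P).coeff ν := by
  induction P using MvPolynomial.induction_on with
  | C a =>
      intro ν
      simp only [restrictPoly, aeval_C]
      exact continuous_const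
  | add p q hp hq =>
      intro ν
      simp only [restrictPoly, map_add, MvPolynomial.coeff_add]
      exact (hp ν).add (hq ν)
  | mul_X p i hp =>
      intro ν
      have key : ∀ A : Matrix (Fin n) (Fin m) ℝ,
          (restrictPoly A (p * X i)).coeff ν
            = ∑ j : Fin m, A i j *
              (if j ∈ ν.support then (restrictPoly A p).coeff (ν - Finsupp.single j 1) else 0) := by
        intro A
        simp only [restrictPoly, _root_.map_mul, aeval_X]
        rw [Finset.mul_sum, MvPolynomial.coeff_sum]
        refine Finset.sum_congr rfl fun j _ => ?_
        rw [mul_left_comm, MvPolynomial.coeff_C_mul, MvPolynomial.coeff_mul_X']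
      simp only [key]
      apply continuous_finset_sum
      intro j _
      apply Continuous.mul (continuous_id.matrix_elem i j)
      split_ifs with h
      · exact hp _
      · exact continuous_const

lemma totalDegree_linear_le (A : Matrix (Fin n) (Fin m) ℝ) (i : Fin n) :
    (∑ j : Fin m, C (A i j) * X j : MvPolynomial (Fin m) ℝ).totalDegree ≤ 1 := by
  refine (MvPolynomial.totalDegree_finset_sum _ _).trans (Finset.sup_le fun j _ => ?_)
  refine (MvPolynomial.totalDegree_mul _ _).trans ?_
  simp [MvPolynomial.totalDegree_C, MvPolynomial.totalDegree_X]

lemma totalDegree_restrict_le (A : Matrix (Fin n) (Fin m) ℝ) (P : MvPolynomial (Fin n) ℝ) :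
    (restrictPoly A P).totalDegree ≤ P.totalDegree := by
  classical
  conv_lhs => rw [← P.support_sum_monomial_coeff]
  simp only [restrictPoly, map_sum]
  refine (MvPolynomial.totalDegree_finset_sum _ _).trans (Finset.sup_le fun v hv => ?_)
  rw [MvPolynomial.aeval_monomial]
  refine (MvPolynomial.totalDegree_mul _ _).trans ?_
  rw [MvPolynomial.algebraMap_eq, MvPolynomial.totalDegree_C, zero_add, Finsupp.prod]
  refine (MvPolynomial.totalDegree_finset_prod _ _).trans ?_
  have hb : ∀ i ∈ v.support, ((∑ j : Fin m, C (A i j) * X j) ^ v i).totalDegree ≤ v i := by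
    intro i _
    refine (MvPolynomial.totalDegree_pow _ _).trans ?_
    calc v i * (∑ j : Fin m, C (A i j) * X j).totalDegree
        ≤ v i * 1 := Nat.mul_le_mul_left _ (totalDegree_linear_le A i)
      _ = v i := mul_one _
  refine le_trans (Finset.sum_le_sum hb) ?_
  have hvs : (∑ i ∈ v.support, v i) = v.sum fun _ e => e := rfl
  rw [hvs]
  exact MvPolynomial.le_totalDegree hv

lemma support_subset_Iic {r : ℕ} {P : MvPolynomial (Fin m) ℝ} (h : P.totalDegree ≤ r) :
    P.support ⊆ Finset.Iic (Finsupp.equivFunOnFinite.symm fun _ : Fin m => r) := by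
  intro ν hν
  rw [Finset.mem_Iic, Finsupp.le_def]
  intro j
  have h1 : ν j ≤ ν.sum fun _ e => e := by
    by_cases hj : j ∈ ν.support
    · rw [Finsupp.sum]
      exact Finset.single_le_sum (fun i _ => Nat.zero_le _) hj
    · simp [Finsupp.notMem_support_iff.mp hj]
  have h2 : (ν.sum fun _ e => e) ≤ r := (MvPolynomial.le_totalDegree hν).trans h
  simpa using h1.trans h2

lemma coeff_restrict_eq_sum {S : Finset (Fin n →₀ ℕ)} {P : MvPolynomial (Fin n) ℝ}
    (hS : P.support ⊆ S) (A : Matrix (Fin n) (Fin m) ℝ) (ν : Fin m →₀ ℕ) :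
    (restrictPoly A P).coeff ν
      = ∑ μ ∈ S, P.coeff μ * (restrictPoly A (MvPolynomial.monomial μ 1)).coeff ν := by
  classical
  have hP : P = ∑ μ ∈ S, C (P.coeff μ) * MvPolynomial.monomial μ 1 := by
    conv_lhs => rw [← P.support_sum_monomial_coeff]
    rw [Finset.sum_subset hS (by intro μ _ hμ; simp [MvPolynomial.notMem_support_iff.mp hμ])]
    refine Finset.sum_congr rfl fun μ _ => ?_
    rw [MvPolynomial.C_mul_monomial, mul_one]
  conv_lhs => rw [hP]
  simp only [restrictPoly, map_sum, _root_.map_mul, aeval_C, MvPolynomial.coeff_sum,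
    MvPolynomial.algebraMap_eq, MvPolynomial.coeff_C_mul]

end Aux

/-- Closedness of the bad set `𝒱(r,s,m,n)` in `𝒫*(r,n)`. -/
theorem statement1 (r n m s : ℕ) (hr : 2 ≤ r) (hn : 2 ≤ n)
    (hm : 1 ≤ m ∧ m ≤ n - 1) (hs : 1 ≤ s ∧ s ≤ r - 1)
    (Q : ℕ → MvPolynomial (Fin n) ℝ) (hQ : ∀ k, Q k ∈ badV r s m n)
    (Qbar : MvPolynomial (Fin n) ℝ) (hQbar : Qbar ∈ PolySpace r n)
    (hconv : ∀ ε > (0:ℝ), ∃ N, ∀ k ≥ N, polyNorm (Q k - Qbar) < ε)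
    (hgrad : polyGrad Qbar 0 ≠ 0) :
    Qbar ∈ badV r s m n := by
  classical
  choose A hA1 hA2 using fun k => (hQ k).2
  -- compactness of the orthonormal frames
  set K : Set (Matrix (Fin n) (Fin m) ℝ) :=
    Set.univ.pi fun _ : Fin n => Set.univ.pi fun _ : Fin m => Set.Icc (-1:ℝ) 1 with hK
  have hKc : IsCompact K := isCompact_univ_pi fun _ => isCompact_univ_pi fun _ => isCompact_Icc
  have hmem : ∀ k, A k ∈ K := by
    intro k
    rw [hK]; refine Set.mem_univ_pi.mpr ?_
    intro i
    rw [Set.mem_univ_pi]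
    intro j
    rw [Set.mem_Icc]
    have h1 : ∑ i' : Fin n, A k i' j * A k i' j = 1 := by
      have h := congrFun (congrFun (hA1 k) j) j
      simpa [Matrix.mul_apply, Matrix.transpose_apply, Matrix.one_apply] using h
    have h2 : A k i j * A k i j ≤ 1 := by
      rw [← h1]
      exact Finset.single_le_sum (fun i' _ => mul_self_nonneg (A k i' j)) (Finset.mem_univ i)
    exact abs_le.mp (abs_le_one_iff_mul_self_le_one.mpr h2)
  haveI : FirstCountableTopology (Matrix (Fin n) (Fin m) ℝ) :=
    inferInstanceAs (FirstCountableTopology (Fin n → Fin m → ℝ))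
  obtain ⟨B, hBK, φ, hφ, hBtend⟩ := hKc.tendsto_subseq hmem
  -- the limit matrix is orthonormal
  have hcont : Continuous fun M : Matrix (Fin n) (Fin m) ℝ => Mᵀ * M :=
    (continuous_id.matrix_transpose).matrix_mul continuous_id
  have hBorth : Bᵀ * B = 1 := by
    have h1 : Filter.Tendsto (fun k => (A (φ k))ᵀ * A (φ k)) Filter.atTop (nhds (Bᵀ * B)) :=
      (hcont.tendsto B).comp hBtend
    have h2 : Filter.Tendsto (fun k => (A (φ k))ᵀ * A (φ k)) Filter.atTop
        (nhds (1 : Matrix (Fin m) (Fin m) ℝ)) := by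
      simp only [hA1]; exact tendsto_const_nhds
    exact tendsto_nhds_unique h1 h2
  -- coefficientwise convergence of Q k to Qbar
  have hcoeff : ∀ μ : Fin n →₀ ℕ,
      Filter.Tendsto (fun k => (Q k).coeff μ) Filter.atTop (nhds (Qbar.coeff μ)) := by
    intro μ
    rw [Metric.tendsto_atTop]
    intro ε hε
    obtain ⟨N, hN⟩ := hconv ε hε
    refine ⟨N, fun k hk => ?_⟩
    rw [Real.dist_eq]
    calc |(Q k).coeff μ - Qbar.coeff μ| = |(Q k - Qbar).coeff μ| := by
          rw [MvPolynomial.coeff_sub]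
      _ ≤ polyNorm (Q k - Qbar) := Aux.abs_coeff_le _ _
      _ < ε := hN k hk
  set S : Finset (Fin n →₀ ℕ) :=
    Finset.Iic (Finsupp.equivFunOnFinite.symm fun _ : Fin n => r) with hSdef
  have hsuppQ : ∀ k, (Q k).support ⊆ S := fun k => Aux.support_subset_Iic (hQ k).1.1.2
  have hsuppQbar : Qbar.support ⊆ S := Aux.support_subset_Iic hQbar.2
  set R : ℕ → MvPolynomial (Fin m) ℝ := fun k => restrictPoly (A (φ k)) (Q (φ k)) with hRdef
  set Rbar := restrictPoly B Qbar with hRbardef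
  have hRtend : ∀ ν : Fin m →₀ ℕ,
      Filter.Tendsto (fun k => (R k).coeff ν) Filter.atTop (nhds (Rbar.coeff ν)) := by
    intro ν
    have key : ∀ k, (R k).coeff ν
        = ∑ μ ∈ S, (Q (φ k)).coeff μ
            * (restrictPoly (A (φ k)) (MvPolynomial.monomial μ 1)).coeff ν :=
      fun k => Aux.coeff_restrict_eq_sum (hsuppQ _) _ ν
    have keybar : Rbar.coeff ν
        = ∑ μ ∈ S, Qbar.coeff μ * (restrictPoly B (MvPolynomial.monomial μ 1)).coeff ν :=
      Aux.coeff_restrict_eq_sum hsuppQbar _ ν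
    simp only [key, keybar]
    apply tendsto_finset_sum
    intro μ _
    exact ((hcoeff μ).comp hφ.tendsto_atTop).mul
      (((Aux.continuous_coeff_restrict (MvPolynomial.monomial μ 1) ν).tendsto B).comp hBtend)
  refine ⟨⟨hQbar, hgrad⟩, B, hBorth, ?_⟩
  intro ε hε
  set T : Finset (Fin m →₀ ℕ) :=
    Finset.Iic (Finsupp.equivFunOnFinite.symm fun _ : Fin m => r) with hTdef
  have hsuppR : ∀ k, (R k).support ⊆ T := fun k =>
    Aux.support_subset_Iic ((Aux.totalDegree_restrict_le _ _).trans (hQ (φ k)).1.1.2)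
  have hsuppRbar : Rbar.support ⊆ T :=
    Aux.support_subset_Iic ((Aux.totalDegree_restrict_le _ _).trans hQbar.2)
  have hev : ∀ᶠ k in Filter.atTop, ∀ ν ∈ T, |(Rbar - R k).coeff ν| ≤ ε/4 := by
    rw [Filter.eventually_all_finset]
    intro ν _
    obtain ⟨N, hN⟩ := Metric.tendsto_atTop.mp (hRtend ν) (ε/4) (by positivity)
    rw [Filter.eventually_atTop]
    refine ⟨N, fun k hk => ?_⟩
    rw [MvPolynomial.coeff_sub, abs_sub_comm]
    have := hN k hk
    rw [Real.dist_eq] at this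
    exact this.le
  obtain ⟨N, hN⟩ := Filter.eventually_atTop.mp hev
  have hnorm : polyNorm (Rbar - R N) ≤ ε/4 := by
    apply Aux.polyNorm_le
    intro ν
    by_cases hν : ν ∈ T
    · exact hN N le_rfl ν hν
    · have h1 : Rbar.coeff ν = 0 :=
        MvPolynomial.notMem_support_iff.mp fun h => hν (hsuppRbar h)
      have h2 : (R N).coeff ν = 0 :=
        MvPolynomial.notMem_support_iff.mp fun h => hν (hsuppR N h)
      rw [MvPolynomial.coeff_sub, h1, h2, sub_zero, abs_zero]
      positivity
  obtain ⟨Q', hQ'mem, hQ'⟩ := hA2 (φ N) (ε/2) (by positivity)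
  refine ⟨Q', hQ'mem, ?_⟩
  calc polyNorm (Rbar - Q')
      ≤ polyNorm (Rbar - R N) + polyNorm (R N - Q') := Aux.polyNorm_sub_le _ _ _
    _ < ε/4 + ε/2 := add_lt_add_of_le_of_lt hnorm hQ'
    _ < ε := by linarith

end
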